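/- Let R be a finite ring with |R| ≥ 2 elements (or a finite field). Let P and Q be a×b matrices over R with P ≠ Q. If x is drawn uniformly at random from R^b, then the probability that P x = Q x is at most 1/|R|. -/

import Mathlib

open Matrix

private lemma freivalds_ker_card {F : Type*} [Field F] [Fintype F] [DecidableEq F] {b : ℕ}
    (v : Fin b → F) (hv : v ≠ 0) :
    (Finset.univ.filter (fun x : Fin b → F => dotProduct v x = 0)).card * Fintype.card F
      = Fintype.card (Fin b → F) := by
  -- f : additive hom x ↦ v ⬝ᵥ x
  let f : (Fin b → F) →+ F :=
    { toFun := fun x => dotProduct v x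
      map_zero' := by simp
      map_add' := fun x y => by simp [dotProduct_add] }
  obtain ⟨j, hj⟩ : ∃ j, v j ≠ 0 := by
    by_contra h
    push_neg at h
    exact hv (funext h)
  have hsurj : Function.Surjective f := by
    intro c
    refine ⟨fun k => if k = j then (v j)⁻¹ * c else 0, ?_⟩
    simp only [f, AddMonoidHom.coe_mk, ZeroHom.coe_mk, dotProduct]
    rw [Finset.sum_eq_single j]
    · rw [if_pos rfl, mul_inv_cancel_left₀ hj]
    · intro k _ hk; simp [hk]
    · simp
  have hker : (Finset.univ.filter (fun x : Fin b → F => dotProduct v x = 0)).card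
      = Fintype.card f.ker := by
    rw [Fintype.card_subtype]
    congr 1
    apply Finset.filter_congr
    intro x _
    simp [f, AddMonoidHom.mem_ker]
  have e1 : ((Fin b → F) ⧸ f.ker) ≃ F :=
    (QuotientAddGroup.quotientKerEquivOfSurjective f hsurj).toEquiv
  have e2 : (Fin b → F) ≃ ((Fin b → F) ⧸ f.ker) × f.ker :=
    AddSubgroup.addGroupEquivQuotientProdAddSubgroup
  have := Fintype.card_congr e2
  rw [Fintype.card_prod, Fintype.card_congr e1] at this
  rw [hker, this, mul_comm]

theorem stmt_2 {F : Type*} [Field F] [Fintype F] [DecidableEq F] {a b : ℕ}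
    (P Q : Matrix (Fin a) (Fin b) F) (hPQ : P ≠ Q) :
    ((Finset.univ.filter (fun x : Fin b → F => P.mulVec x = Q.mulVec x)).card : ℝ)
      / (Fintype.card (Fin b → F) : ℝ) ≤ 1 / (Fintype.card F : ℝ) := by
  obtain ⟨i, hi⟩ : ∃ i, P i ≠ Q i := by
    by_contra h
    push_neg at h
    exact hPQ (funext h)
  set v : Fin b → F := P i - Q i with hv
  have hvne : v ≠ 0 := sub_ne_zero.mpr hi
  have hsub : (Finset.univ.filter (fun x : Fin b → F => P.mulVec x = Q.mulVec x))
      ⊆ (Finset.univ.filter (fun x : Fin b → F => dotProduct v x = 0)) := by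
    intro x hx
    simp only [Finset.mem_filter, Finset.mem_univ, true_and] at hx ⊢
    have := congrFun hx i
    simp only [mulVec, hv] at this ⊢
    rw [sub_dotProduct, this, sub_self]
  have hcard := Finset.card_le_card hsub
  have hkey := freivalds_ker_card v hvne
  have hF : (0:ℝ) < Fintype.card F := by positivity
  have hD : (0:ℝ) < Fintype.card (Fin b → F) := by positivity
  rw [div_le_div_iff₀ hD hF]
  calc ((Finset.univ.filter (fun x : Fin b → F => P.mulVec x = Q.mulVec x)).card : ℝ)
        * (Fintype.card F : ℝ)
      ≤ ((Finset.univ.filter (fun x : Fin b → F => dotProduct v x = 0)).card : ℝ)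
        * (Fintype.card F : ℝ) := by
        exact mul_le_mul_of_nonneg_right (by exact_mod_cast hcard) hF.le
    _ = (Fintype.card (Fin b → F) : ℝ) := by exact_mod_cast hkey
    _ = 1 * (Fintype.card (Fin b → F) : ℝ) := (one_mul _).symm
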